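/- Let φ ∈ Λ⁴V be a decomposable 4-form. Then for all u,v,w ∈ V the cyclic sum [[β^φ_u, β^φ_v], ι(w)] + [[β^φ_v, β^φ_w], ι(u)] + [[β^φ_w, β^φ_u], ι(v)] = 0 in Cl(V), where [x,y] := x·y − y·x. (This is the [VVV] component of the Jacobi identity for the filtered deformation determined by φ.) -/

import Mathlib

noncomputable section

variable (V : Type) [AddCommGroup V] [Module ℝ V]

/-- The quadratic form `v ↦ -η(v,v)`; its Clifford algebra satisfies
`ι v * ι v = -η(v,v) • 1`. -/
def Qf (η : LinearMap.BilinForm ℝ V) : QuadraticForm ℝ V := (-η).toQuadraticMap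

/-- `A` belongs to `so(V)`: it is skew-adjoint with respect to `η`. -/
def IsSkew (η : LinearMap.BilinForm ℝ V) (A : Module.End ℝ V) : Prop :=
  ∀ v w : V, η (A v) w + η v (A w) = 0

/-- `e` is an `η`-orthonormal basis exhibiting the 'mostly minus' Lorentzian
signature `(1,10)` in dimension 11. -/
def IsLorentzianBasis (η : LinearMap.BilinForm ℝ V) (e : Module.Basis (Fin 11) ℝ V) : Prop :=
  ∀ i j, η (e i) (e j) = if i = j then (if (i : ℕ) = 0 then 1 else -1) else 0

/-- `hat η θ` is the image of `θ ∈ ΛV` under the inverse of the canonical linear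
isomorphism `Cl(V) ≅ ΛV` (Mathlib's `CliffordAlgebra.equivExterior`). -/
def hat (η : LinearMap.BilinForm ℝ V) (θ : ExteriorAlgebra ℝ V) : CliffordAlgebra (Qf V η) :=
  (CliffordAlgebra.equivExterior (Qf V η)).symm θ

/-- `β^φ_v = ι(v)·φ̂ − 3·φ̂·ι(v)` in the Clifford algebra. -/
def betaPhi (η : LinearMap.BilinForm ℝ V) (φ : ExteriorAlgebra ℝ V) (v : V) :
    CliffordAlgebra (Qf V η) :=
  CliffordAlgebra.ι (Qf V η) v * hat V η φ - (3 : ℝ) • (hat V η φ * CliffordAlgebra.ι (Qf V η) v)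

/-- `φ` is a decomposable 4-form: a wedge of four vectors (wedge product in the exterior
algebra is multiplication). -/
def Decomposable4 (φ : ExteriorAlgebra ℝ V) : Prop :=
  ∃ x₁ x₂ x₃ x₄ : V, φ = ExteriorAlgebra.ι ℝ x₁ * ExteriorAlgebra.ι ℝ x₂ *
    ExteriorAlgebra.ι ℝ x₃ * ExteriorAlgebra.ι ℝ x₄

/-- The commutator `[x,y] = x·y − y·x` in the Clifford algebra. -/
def brk (η : LinearMap.BilinForm ℝ V) (x y : CliffordAlgebra (Qf V η)) :
    CliffordAlgebra (Qf V η) := x * y - y * x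

open CliffordAlgebra
namespace Stmt7Core
variable {M : Type} [AddCommGroup M] [Module ℝ M] (Q : QuadraticForm ℝ M)

theorem hsw (x y : M) (t : CliffordAlgebra Q) :
    ι Q x * (ι Q y * t) = QuadraticMap.polar Q x y • t - ι Q y * (ι Q x * t) := by
  rw [← mul_assoc, eq_sub_of_add_eq (ι_mul_ι_add_swap x y), sub_mul, ← Algebra.smul_def,
    mul_assoc]

theorem hswe (x y : M) :
    ι Q x * ι Q y = QuadraticMap.polar Q x y • (1 : CliffordAlgebra Q) - ι Q y * ι Q x := by
  rw [eq_sub_of_add_eq (ι_mul_ι_add_swap x y), Algebra.algebraMap_eq_smul_one]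

theorem hsq (x : M) (t : CliffordAlgebra Q) : ι Q x * (ι Q x * t) = Q x • t := by
  rw [← mul_assoc, ι_sq_scalar, ← Algebra.smul_def]

theorem hsqe (x : M) : ι Q x * ι Q x = Q x • (1 : CliffordAlgebra Q) := by
  rw [ι_sq_scalar, Algebra.algebraMap_eq_smul_one]

variable (z₁ z₂ z₃ z₄ : M)
    (h12 : QuadraticMap.polar Q z₁ z₂ = 0) (h13 : QuadraticMap.polar Q z₁ z₃ = 0)
    (h14 : QuadraticMap.polar Q z₁ z₄ = 0) (h23 : QuadraticMap.polar Q z₂ z₃ = 0)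
    (h24 : QuadraticMap.polar Q z₂ z₄ = 0) (h34 : QuadraticMap.polar Q z₃ z₄ = 0)

include h12 h13 h14 h23 h24 h34 in
theorem prod_eq (a c : M) :
    (ι Q a * (ι Q z₁ * (ι Q z₂ * (ι Q z₃ * ι Q z₄)))
      - (3:ℝ) • ((ι Q z₁ * (ι Q z₂ * (ι Q z₃ * ι Q z₄))) * ι Q a)) *
    (ι Q c * (ι Q z₁ * (ι Q z₂ * (ι Q z₃ * ι Q z₄)))
      - (3:ℝ) • ((ι Q z₁ * (ι Q z₂ * (ι Q z₃ * ι Q z₄))) * ι Q c)) =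
      (4*(Q z₁*Q z₂*Q z₃*Q z₄)) • (ι Q a * ι Q c)
      + (2*(Q z₂*Q z₃*Q z₄)*(QuadraticMap.polar Q c z₁)) • (ι Q a * ι Q z₁)
      + (2*(Q z₁*Q z₃*Q z₄)*(QuadraticMap.polar Q c z₂)) • (ι Q a * ι Q z₂)
      + (2*(Q z₁*Q z₂*Q z₄)*(QuadraticMap.polar Q c z₃)) • (ι Q a * ι Q z₃)
      + (2*(Q z₁*Q z₂*Q z₃)*(QuadraticMap.polar Q c z₄)) • (ι Q a * ι Q z₄)
      + (-(6*(Q z₂*Q z₃*Q z₄)*(QuadraticMap.polar Q a z₁))) • (ι Q z₁ * ι Q c)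
      + (-(6*(Q z₁*Q z₃*Q z₄)*(QuadraticMap.polar Q a z₂))) • (ι Q z₂ * ι Q c)
      + (-(6*(Q z₁*Q z₂*Q z₄)*(QuadraticMap.polar Q a z₃))) • (ι Q z₃ * ι Q c)
      + (-(6*(Q z₁*Q z₂*Q z₃)*(QuadraticMap.polar Q a z₄))) • (ι Q z₄ * ι Q c)
      + (-(3*((Q z₂*Q z₃*Q z₄)*(QuadraticMap.polar Q a z₁)*(QuadraticMap.polar Q c z₁) + (Q z₁*Q z₃*Q z₄)*(QuadraticMap.polar Q a z₂)*(QuadraticMap.polar Q c z₂) + (Q z₁*Q z₂*Q z₄)*(QuadraticMap.polar Q a z₃)*(QuadraticMap.polar Q c z₃) + (Q z₁*Q z₂*Q z₃)*(QuadraticMap.polar Q a z₄)*(QuadraticMap.polar Q c z₄)))) • (1 : CliffordAlgebra Q)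
      + (-(3*(Q z₃*Q z₄)*((QuadraticMap.polar Q a z₁)*(QuadraticMap.polar Q c z₂) - (QuadraticMap.polar Q a z₂)*(QuadraticMap.polar Q c z₁)))) • (ι Q z₁ * ι Q z₂)
      + (-(3*(Q z₂*Q z₄)*((QuadraticMap.polar Q a z₁)*(QuadraticMap.polar Q c z₃) - (QuadraticMap.polar Q a z₃)*(QuadraticMap.polar Q c z₁)))) • (ι Q z₁ * ι Q z₃)
      + (-(3*(Q z₂*Q z₃)*((QuadraticMap.polar Q a z₁)*(QuadraticMap.polar Q c z₄) - (QuadraticMap.polar Q a z₄)*(QuadraticMap.polar Q c z₁)))) • (ι Q z₁ * ι Q z₄)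
      + (-(3*(Q z₁*Q z₄)*((QuadraticMap.polar Q a z₂)*(QuadraticMap.polar Q c z₃) - (QuadraticMap.polar Q a z₃)*(QuadraticMap.polar Q c z₂)))) • (ι Q z₂ * ι Q z₃)
      + (-(3*(Q z₁*Q z₃)*((QuadraticMap.polar Q a z₂)*(QuadraticMap.polar Q c z₄) - (QuadraticMap.polar Q a z₄)*(QuadraticMap.polar Q c z₂)))) • (ι Q z₂ * ι Q z₄)
      + (-(3*(Q z₁*Q z₂)*((QuadraticMap.polar Q a z₃)*(QuadraticMap.polar Q c z₄) - (QuadraticMap.polar Q a z₄)*(QuadraticMap.polar Q c z₃)))) • (ι Q z₃ * ι Q z₄) := by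
  have h21 : QuadraticMap.polar Q z₂ z₁ = 0 := by rw [QuadraticMap.polar_comm]; exact h12
  have h31 : QuadraticMap.polar Q z₃ z₁ = 0 := by rw [QuadraticMap.polar_comm]; exact h13
  have h41 : QuadraticMap.polar Q z₄ z₁ = 0 := by rw [QuadraticMap.polar_comm]; exact h14
  have h32 : QuadraticMap.polar Q z₃ z₂ = 0 := by rw [QuadraticMap.polar_comm]; exact h23
  have h42 : QuadraticMap.polar Q z₄ z₂ = 0 := by rw [QuadraticMap.polar_comm]; exact h24
  have h43 : QuadraticMap.polar Q z₄ z₃ = 0 := by rw [QuadraticMap.polar_comm]; exact h34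
  have hp1a : QuadraticMap.polar Q z₁ a = QuadraticMap.polar Q a z₁ := QuadraticMap.polar_comm _ _ _
  have hp2a : QuadraticMap.polar Q z₂ a = QuadraticMap.polar Q a z₂ := QuadraticMap.polar_comm _ _ _
  have hp3a : QuadraticMap.polar Q z₃ a = QuadraticMap.polar Q a z₃ := QuadraticMap.polar_comm _ _ _
  have hp4a : QuadraticMap.polar Q z₄ a = QuadraticMap.polar Q a z₄ := QuadraticMap.polar_comm _ _ _
  have hp1c : QuadraticMap.polar Q z₁ c = QuadraticMap.polar Q c z₁ := QuadraticMap.polar_comm _ _ _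
  have hp2c : QuadraticMap.polar Q z₂ c = QuadraticMap.polar Q c z₂ := QuadraticMap.polar_comm _ _ _
  have hp3c : QuadraticMap.polar Q z₃ c = QuadraticMap.polar Q c z₃ := QuadraticMap.polar_comm _ _ _
  have hp4c : QuadraticMap.polar Q z₄ c = QuadraticMap.polar Q c z₄ := QuadraticMap.polar_comm _ _ _
  simp only [hsw Q z₂ z₁, hsw Q z₃ z₁, hsw Q z₄ z₁, hsw Q z₃ z₂, hsw Q z₄ z₂, hsw Q z₄ z₃,
    hswe Q z₂ z₁, hswe Q z₃ z₁, hswe Q z₄ z₁, hswe Q z₃ z₂, hswe Q z₄ z₂, hswe Q z₄ z₃,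
    hsq Q z₁, hsq Q z₂, hsq Q z₃, hsq Q z₄, hsqe Q z₁, hsqe Q z₂, hsqe Q z₃, hsqe Q z₄,
    hsw Q z₁ a, hsw Q z₂ a, hsw Q z₃ a, hsw Q z₄ a,
    hswe Q z₁ a, hswe Q z₂ a, hswe Q z₃ a, hswe Q z₄ a,
    hsw Q z₁ c, hsw Q z₂ c, hsw Q z₃ c, hsw Q z₄ c,
    hswe Q z₁ c, hswe Q z₂ c, hswe Q z₃ c, hswe Q z₄ c,
    h12, h13, h14, h23, h24, h34, h21, h31, h41, h32, h42, h43,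
    hp1a, hp2a, hp3a, hp4a, hp1c, hp2c, hp3c, hp4c,
    mul_assoc, mul_sub, sub_mul, mul_add, add_mul, smul_mul_assoc, mul_smul_comm, smul_smul,
    mul_one, one_mul, zero_smul, smul_zero, zero_mul, mul_zero, sub_zero, zero_sub, add_zero,
    zero_add, neg_mul, mul_neg, smul_neg, neg_smul, neg_neg]
  module


include h12 h13 h14 h23 h24 h34 in
set_option maxHeartbeats 4000000 in
theorem main_alg (u v w : M) :
    (((ι Q u * (ι Q z₁ * (ι Q z₂ * (ι Q z₃ * ι Q z₄))) - (3:ℝ) • ((ι Q z₁ * (ι Q z₂ * (ι Q z₃ * ι Q z₄))) * ι Q u)) * (ι Q v * (ι Q z₁ * (ι Q z₂ * (ι Q z₃ * ι Q z₄))) - (3:ℝ) • ((ι Q z₁ * (ι Q z₂ * (ι Q z₃ * ι Q z₄))) * ι Q v)) - (ι Q v * (ι Q z₁ * (ι Q z₂ * (ι Q z₃ * ι Q z₄))) - (3:ℝ) • ((ι Q z₁ * (ι Q z₂ * (ι Q z₃ * ι Q z₄))) * ι Q v)) * (ι Q u * (ι Q z₁ * (ι Q z₂ * (ι Q z₃ *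 ι Q z₄))) - (3:ℝ) • ((ι Q z₁ * (ι Q z₂ * (ι Q z₃ * ι Q z₄))) * ι Q u))) * ι Q w - ι Q w * ((ι Q u * (ι Q z₁ * (ι Q z₂ * (ι Q z₃ * ι Q z₄))) - (3:ℝ) • ((ι Q z₁ * (ι Q z₂ * (ι Q z₃ * ι Q z₄))) * ι Q u)) * (ι Q v * (ι Q z₁ * (ι Q z₂ * (ι Q z₃ * ι Q z₄))) - (3:ℝ) • ((ι Q z₁ * (ι Q z₂ * (ι Q z₃ * ι Q z₄))) * ι Q v)) - (ι Q v * (ι Q z₁ * (ι Q z₂ * (ι Q z₃ * ι Q z₄))) - (3:ℝ) • ((ι Q z₁ * (ι Q z₂ * (ι Q z₃ * ι Q z₄))) * ι Q v)) * (ι Q u * (ι Q z₁ * (ι Q z₂ * (ι Q z₃ * ι Q z₄))) - (3:ℝ) • ((ι Q z₁ * (ι Q z₂ * (ι Q z₃ * ι Q z₄))) * ι Q u))))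
      + (((ι Q v * (ι Q z₁ * (ι Q z₂ * (ι Q z₃ * ι Q z₄))) - (3:ℝ) • ((ι Q z₁ * (ι Q z₂ * (ι Q z₃ * ι Q z₄))) * ι Q v)) * (ι Q w * (ι Q z₁ * (ι Q z₂ * (ι Q z₃ * ι Q z₄))) - (3:ℝ) • ((ι Q z₁ * (ι Q z₂ * (ι Q z₃ * ι Q z₄))) * ι Q w)) - (ι Q w * (ι Q z₁ * (ι Q z₂ * (ι Q z₃ * ι Q z₄))) - (3:ℝ) • ((ι Q z₁ * (ι Q z₂ * (ι Q z₃ * ι Q z₄))) * ι Q w)) * (ι Q v * (ι Q z₁ * (ι Q z₂ * (ι Q z₃ * ι Q z₄))) - (3:ℝ) • ((ι Q z₁ * (ι Q z₂ * (ι Q z₃ * ι Q z₄))) * ι Q v))) * ι Q u - ι Q u * ((ι Q v * (ι Q z₁ * (ι Q z₂ * (ι Q z₃ * ι Q z₄))) - (3:ℝ) • ((ι Q z₁ * (ι Q z₂ * (ι Q z₃ * ι Q z₄))) * ι Q v)) * (ι Q w * (ι Q z₁ * (ι Q z₂ * (ι Q z₃ * ι Q z₄))) - (3:ℝ) • ((ι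 Q z₁ * (ι Q z₂ * (ι Q z₃ * ι Q z₄))) * ι Q w)) - (ι Q w * (ι Q z₁ * (ι Q z₂ * (ι Q z₃ * ι Q z₄))) - (3:ℝ) • ((ι Q z₁ * (ι Q z₂ * (ι Q z₃ * ι Q z₄))) * ι Q w)) * (ι Q v * (ι Q z₁ * (ι Q z₂ * (ι Q z₃ * ι Q z₄))) - (3:ℝ) • ((ι Q z₁ * (ι Q z₂ * (ι Q z₃ * ι Q z₄))) * ι Q v))))
      + (((ι Q w * (ι Q z₁ * (ι Q z₂ * (ι Q z₃ * ι Q z₄))) - (3:ℝ) • ((ι Q z₁ * (ι Q z₂ * (ι Q z₃ * ι Q z₄))) * ι Q w)) * (ι Q u * (ι Q z₁ * (ι Q z₂ * (ι Q z₃ * ι Q z₄))) - (3:ℝ) • ((ι Q z₁ * (ι Q z₂ * (ι Q z₃ * ι Q z₄))) * ι Q u)) - (ι Q u * (ι Q z₁ * (ι Q z₂ * (ι Q z₃ * ι Q z₄))) - (3:ℝ) • ((ι Q z₁ * (ι Q z₂ * (ι Q z₃ * ι Q z₄))) * ι Q u)) * (ι Q w * (ι Q z₁ * (ι Q z₂ *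 (ι Q z₃ * ι Q z₄))) - (3:ℝ) • ((ι Q z₁ * (ι Q z₂ * (ι Q z₃ * ι Q z₄))) * ι Q w))) * ι Q v - ι Q v * ((ι Q w * (ι Q z₁ * (ι Q z₂ * (ι Q z₃ * ι Q z₄))) - (3:ℝ) • ((ι Q z₁ * (ι Q z₂ * (ι Q z₃ * ι Q z₄))) * ι Q w)) * (ι Q u * (ι Q z₁ * (ι Q z₂ * (ι Q z₃ * ι Q z₄))) - (3:ℝ) • ((ι Q z₁ * (ι Q z₂ * (ι Q z₃ * ι Q z₄))) * ι Q u)) - (ι Q u * (ι Q z₁ * (ι Q z₂ * (ι Q z₃ * ι Q z₄))) - (3:ℝ) • ((ι Q z₁ * (ι Q z₂ * (ι Q z₃ * ι Q z₄))) * ι Q u)) * (ι Q w * (ι Q z₁ * (ι Q z₂ * (ι Q z₃ * ι Q z₄))) - (3:ℝ) • ((ι Q z₁ * (ι Q z₂ * (ι Q z₃ * ι Q z₄))) * ι Q w)))) = 0 := by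
  have pe := prod_eq Q z₁ z₂ z₃ z₄ h12 h13 h14 h23 h24 h34
  rw [pe u v, pe v u, pe v w, pe w v, pe w u, pe u w]
  have hpvu : QuadraticMap.polar Q v u = QuadraticMap.polar Q u v := QuadraticMap.polar_comm _ _ _
  have hpwu : QuadraticMap.polar Q w u = QuadraticMap.polar Q u w := QuadraticMap.polar_comm _ _ _
  have hpwv : QuadraticMap.polar Q w v = QuadraticMap.polar Q v w := QuadraticMap.polar_comm _ _ _
  have hp1u : QuadraticMap.polar Q z₁ u = QuadraticMap.polar Q u z₁ := QuadraticMap.polar_comm _ _ _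
  have hp2u : QuadraticMap.polar Q z₂ u = QuadraticMap.polar Q u z₂ := QuadraticMap.polar_comm _ _ _
  have hp3u : QuadraticMap.polar Q z₃ u = QuadraticMap.polar Q u z₃ := QuadraticMap.polar_comm _ _ _
  have hp4u : QuadraticMap.polar Q z₄ u = QuadraticMap.polar Q u z₄ := QuadraticMap.polar_comm _ _ _
  have hp1v : QuadraticMap.polar Q z₁ v = QuadraticMap.polar Q v z₁ := QuadraticMap.polar_comm _ _ _
  have hp2v : QuadraticMap.polar Q z₂ v = QuadraticMap.polar Q v z₂ := QuadraticMap.polar_comm _ _ _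
  have hp3v : QuadraticMap.polar Q z₃ v = QuadraticMap.polar Q v z₃ := QuadraticMap.polar_comm _ _ _
  have hp4v : QuadraticMap.polar Q z₄ v = QuadraticMap.polar Q v z₄ := QuadraticMap.polar_comm _ _ _
  have hp1w : QuadraticMap.polar Q z₁ w = QuadraticMap.polar Q w z₁ := QuadraticMap.polar_comm _ _ _
  have hp2w : QuadraticMap.polar Q z₂ w = QuadraticMap.polar Q w z₂ := QuadraticMap.polar_comm _ _ _
  have hp3w : QuadraticMap.polar Q z₃ w = QuadraticMap.polar Q w z₃ := QuadraticMap.polar_comm _ _ _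
  have hp4w : QuadraticMap.polar Q z₄ w = QuadraticMap.polar Q w z₄ := QuadraticMap.polar_comm _ _ _
  simp only [hsw Q v u, hsw Q w u, hsw Q w v, hswe Q v u, hswe Q w u, hswe Q w v,
    hsw Q z₁ u, hsw Q z₂ u, hsw Q z₃ u, hsw Q z₄ u,
    hswe Q z₁ u, hswe Q z₂ u, hswe Q z₃ u, hswe Q z₄ u,
    hsw Q z₁ v, hsw Q z₂ v, hsw Q z₃ v, hsw Q z₄ v,
    hswe Q z₁ v, hswe Q z₂ v, hswe Q z₃ v, hswe Q z₄ v,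
    hsw Q z₁ w, hsw Q z₂ w, hsw Q z₃ w, hsw Q z₄ w,
    hswe Q z₁ w, hswe Q z₂ w, hswe Q z₃ w, hswe Q z₄ w,
    hpvu, hpwu, hpwv, hp1u, hp2u, hp3u, hp4u, hp1v, hp2v, hp3v, hp4v, hp1w, hp2w, hp3w, hp4w,
    h12, h13, h14, h23, h24, h34,
    mul_assoc, mul_sub, sub_mul, mul_add, add_mul, smul_mul_assoc, mul_smul_comm, smul_smul,
    mul_one, one_mul, zero_smul, smul_zero, zero_mul, mul_zero, sub_zero, zero_sub, add_zero,
    zero_add, neg_mul, mul_neg, smul_neg, neg_smul, neg_neg]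
  module

end Stmt7Core

open CliffordAlgebra

theorem hat_changeForm (η : LinearMap.BilinForm ℝ V) (θ : ExteriorAlgebra ℝ V) :
    hat V η θ = CliffordAlgebra.changeForm
      (changeForm.neg_proof (changeForm.associated_neg_proof (Q := Qf V η))) θ := rfl

theorem Bc_zero (η : LinearMap.BilinForm ℝ V) (x y : V)
    (h : QuadraticMap.polar (Qf V η) x y = 0) :
    (-(QuadraticMap.associated (R := ℝ) (-(Qf V η)))) x y = 0 := by
  have h2 : QuadraticMap.polar (⇑(-(Qf V η))) x y = 0 := by
    have he : ⇑(-(Qf V η)) = -⇑(Qf V η) := rfl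
    rw [he, QuadraticMap.polar_neg, h, neg_zero]
  simp only [LinearMap.neg_apply, QuadraticMap.associated_apply]
  rw [show (-(Qf V η)) (x + y) - (-(Qf V η)) x - (-(Qf V η)) y
      = QuadraticMap.polar (⇑(-(Qf V η))) x y from rfl, h2, smul_zero, neg_zero]

theorem hat_prod (η : LinearMap.BilinForm ℝ V) (z₁ z₂ z₃ z₄ : V)
    (h12 : QuadraticMap.polar (Qf V η) z₁ z₂ = 0) (h13 : QuadraticMap.polar (Qf V η) z₁ z₃ = 0)
    (h14 : QuadraticMap.polar (Qf V η) z₁ z₄ = 0) (h23 : QuadraticMap.polar (Qf V η) z₂ z₃ = 0)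
    (h24 : QuadraticMap.polar (Qf V η) z₂ z₄ = 0) (h34 : QuadraticMap.polar (Qf V η) z₃ z₄ = 0) :
    hat V η (ExteriorAlgebra.ι ℝ z₁ * (ExteriorAlgebra.ι ℝ z₂ *
        (ExteriorAlgebra.ι ℝ z₃ * ExteriorAlgebra.ι ℝ z₄)))
      = ι (Qf V η) z₁ * (ι (Qf V η) z₂ * (ι (Qf V η) z₃ * ι (Qf V η) z₄)) := by
  have hB12 := Bc_zero V η z₁ z₂ h12
  have hB13 := Bc_zero V η z₁ z₃ h13
  have hB14 := Bc_zero V η z₁ z₄ h14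
  have hB23 := Bc_zero V η z₂ z₃ h23
  have hB24 := Bc_zero V η z₂ z₄ h24
  have hB34 := Bc_zero V η z₃ z₄ h34
  rw [hat_changeForm]
  rw [changeForm_ι_mul, changeForm_ι_mul, changeForm_ι_mul_ι]
  simp only [contractLeft_ι_mul, contractLeft_ι, map_sub, map_smul, LinearMap.smul_apply,
    hB12, hB13, hB14, hB23, hB24, hB34, map_zero, zero_smul, smul_zero, sub_zero, zero_sub,
    mul_zero, zero_mul, neg_zero, contractLeft_algebraMap]

theorem hprod4 (v : Fin 4 → V) :
    ExteriorAlgebra.ιMulti ℝ 4 v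
      = ExteriorAlgebra.ι ℝ (v 0) * (ExteriorAlgebra.ι ℝ (v 1) *
        (ExteriorAlgebra.ι ℝ (v 2) * ExteriorAlgebra.ι ℝ (v 3))) := by
  simp [ExteriorAlgebra.ιMulti_apply, List.ofFn_succ]
  rfl

theorem orth_decomp (η : LinearMap.BilinForm ℝ V) (x₁ x₂ x₃ x₄ : V) :
    ∃ z₁ z₂ z₃ z₄ : V,
      (QuadraticMap.polar (Qf V η) z₁ z₂ = 0 ∧ QuadraticMap.polar (Qf V η) z₁ z₃ = 0 ∧
       QuadraticMap.polar (Qf V η) z₁ z₄ = 0 ∧ QuadraticMap.polar (Qf V η) z₂ z₃ = 0 ∧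
       QuadraticMap.polar (Qf V η) z₂ z₄ = 0 ∧ QuadraticMap.polar (Qf V η) z₃ z₄ = 0) ∧
      ExteriorAlgebra.ι ℝ x₁ * ExteriorAlgebra.ι ℝ x₂ * ExteriorAlgebra.ι ℝ x₃ *
        ExteriorAlgebra.ι ℝ x₄
        = ExteriorAlgebra.ι ℝ z₁ * (ExteriorAlgebra.ι ℝ z₂ *
          (ExteriorAlgebra.ι ℝ z₃ * ExteriorAlgebra.ι ℝ z₄)) := by
  classical
  by_cases hli : LinearIndependent ℝ ![x₁, x₂, x₃, x₄]
  · set W := Submodule.span ℝ (Set.range ![x₁, x₂, x₃, x₄]) with hW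
    haveI : FiniteDimensional ℝ W := FiniteDimensional.span_of_finite ℝ (Set.finite_range _)
    have hrank : Module.finrank ℝ W = 4 := by
      rw [hW, finrank_span_eq_card hli, Fintype.card_fin]
    have hsymm : ((QuadraticMap.polarBilin (Qf V η)).domRestrict₁₂ W W).IsSymm := by
      refine ⟨fun a b => ?_⟩
      simp only [LinearMap.domRestrict₁₂_apply, QuadraticMap.polarBilin_apply_apply,
        RingHom.id_apply]
      exact QuadraticMap.polar_comm _ _ _
    obtain ⟨y0, hy0⟩ := LinearMap.BilinForm.exists_orthogonal_basis hsymm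
    let y : Module.Basis (Fin 4) ℝ W := y0.reindex (finCongr hrank)
    have hyorth : ∀ i j : Fin 4, i ≠ j →
        QuadraticMap.polar (Qf V η) ((y i : V)) ((y j : V)) = 0 := by
      intro i j hij
      have h0 := (LinearMap.isOrthoᵢ_def.mp hy0) ((finCongr hrank).symm i)
        ((finCongr hrank).symm j)
        (fun hc => hij (by simpa using congrArg (finCongr hrank) hc))
      simpa only [LinearMap.domRestrict₁₂_apply, QuadraticMap.polarBilin_apply_apply,
        Module.Basis.reindex_apply, y] using h0
    set f : W [⋀^Fin 4]→ₗ[ℝ] ExteriorAlgebra ℝ V :=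
      (ExteriorAlgebra.ιMulti ℝ 4).compLinearMap W.subtype with hf
    have hfg : f = (LinearMap.toSpanSingleton ℝ _ (f fun i => y i)).compAlternatingMap y.det := by
      refine Module.Basis.ext_alternating y ?_
      intro σv hinj
      have hbij : Function.Bijective σv := Finite.injective_iff_bijective.mp hinj
      let σ : Equiv.Perm (Fin 4) := Equiv.ofBijective σv hbij
      have h1 : (f fun i => y (σv i)) = Equiv.Perm.sign σ • f (fun i => y i) :=
        AlternatingMap.map_perm f (fun i => y i) σ
      have h2 : y.det (fun i => y (σv i)) = Equiv.Perm.sign σ • (1 : ℝ) := by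
        have := AlternatingMap.map_perm y.det (fun i => y i) σ
        rw [show (fun i => y (σv i)) = ((fun i => y i) ∘ σ) from rfl, this, Module.Basis.det_self]
      rw [LinearMap.compAlternatingMap_apply, h2, LinearMap.toSpanSingleton_apply]
      rcases Int.units_eq_one_or (Equiv.Perm.sign σ) with hs | hs <;>
        simp [hs, h1]
    have m1 : x₁ ∈ W := Submodule.subset_span ⟨0, rfl⟩
    have m2 : x₂ ∈ W := Submodule.subset_span ⟨1, rfl⟩
    have m3 : x₃ ∈ W := Submodule.subset_span ⟨2, rfl⟩
    have m4 : x₄ ∈ W := Submodule.subset_span ⟨3, rfl⟩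
    set xv : Fin 4 → W := ![⟨x₁, m1⟩, ⟨x₂, m2⟩, ⟨x₃, m3⟩, ⟨x₄, m4⟩] with hxv
    have hcoe : (fun i => ((xv i : V))) = ![x₁, x₂, x₃, x₄] := by
      funext i
      fin_cases i <;> rfl
    have hfx : f xv = ExteriorAlgebra.ι ℝ x₁ * (ExteriorAlgebra.ι ℝ x₂ *
        (ExteriorAlgebra.ι ℝ x₃ * ExteriorAlgebra.ι ℝ x₄)) := by
      rw [hf, AlternatingMap.compLinearMap_apply]
      rw [show (fun i => W.subtype (xv i)) = (fun i => ((xv i : V))) from rfl, hcoe, hprod4]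
      rfl
    have hfy : f (fun i => y i) = ExteriorAlgebra.ι ℝ (y 0 : V) * (ExteriorAlgebra.ι ℝ (y 1 : V) *
        (ExteriorAlgebra.ι ℝ (y 2 : V) * ExteriorAlgebra.ι ℝ (y 3 : V))) := by
      rw [hf, AlternatingMap.compLinearMap_apply, hprod4]
      rfl
    have hkey : f xv = (y.det xv) • f (fun i => y i) := by
      conv_lhs => rw [hfg]
      rw [LinearMap.compAlternatingMap_apply, LinearMap.toSpanSingleton_apply]
    refine ⟨(y.det xv) • (y 0 : V), (y 1 : V), (y 2 : V), (y 3 : V),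
      ⟨?_, ?_, ?_, ?_, ?_, ?_⟩, ?_⟩
    · rw [QuadraticMap.polar_smul_left, hyorth 0 1 (by decide), smul_zero]
    · rw [QuadraticMap.polar_smul_left, hyorth 0 2 (by decide), smul_zero]
    · rw [QuadraticMap.polar_smul_left, hyorth 0 3 (by decide), smul_zero]
    · exact hyorth 1 2 (by decide)
    · exact hyorth 1 3 (by decide)
    · exact hyorth 2 3 (by decide)
    · rw [mul_assoc, mul_assoc, ← hfx, hkey, hfy, map_smul, smul_mul_assoc]
  · have h0 := AlternatingMap.map_linearDependent (ExteriorAlgebra.ιMulti ℝ 4)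
      ![x₁, x₂, x₃, x₄] hli
    rw [hprod4] at h0
    refine ⟨0, 0, 0, 0, ⟨by simp [QuadraticMap.polar], by simp [QuadraticMap.polar],
      by simp [QuadraticMap.polar], by simp [QuadraticMap.polar],
      by simp [QuadraticMap.polar], by simp [QuadraticMap.polar]⟩, ?_⟩
    rw [show ExteriorAlgebra.ι ℝ (0 : V) = 0 from map_zero _, zero_mul]
    rw [mul_assoc, mul_assoc]
    exact h0

/-- the `[VVV]` Jacobi identity: for a decomposable 4-form `φ`, the cyclic
sum `[[β^φ_u, β^φ_v], ι(w)] + [[β^φ_v, β^φ_w], ι(u)] + [[β^φ_w, β^φ_u], ι(v)] = 0`. -/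
theorem stmt_7
    (η : LinearMap.BilinForm ℝ V) (e : Module.Basis (Fin 11) ℝ V) (he : IsLorentzianBasis V η e)
    (φ : ExteriorAlgebra ℝ V) (hφdec : Decomposable4 V φ) :
    ∀ u v w : V,
      brk V η (brk V η (betaPhi V η φ u) (betaPhi V η φ v)) (CliffordAlgebra.ι (Qf V η) w)
      + brk V η (brk V η (betaPhi V η φ v) (betaPhi V η φ w)) (CliffordAlgebra.ι (Qf V η) u)
      + brk V η (brk V η (betaPhi V η φ w) (betaPhi V η φ u)) (CliffordAlgebra.ι (Qf V η) v)
      = 0 := by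
  obtain ⟨x₁, x₂, x₃, x₄, rfl⟩ := hφdec
  intro u v w
  obtain ⟨z₁, z₂, z₃, z₄, ⟨h12, h13, h14, h23, h24, h34⟩, hEq⟩ := orth_decomp V η x₁ x₂ x₃ x₄
  have hhat : hat V η (ExteriorAlgebra.ι ℝ x₁ * ExteriorAlgebra.ι ℝ x₂ *
      ExteriorAlgebra.ι ℝ x₃ * ExteriorAlgebra.ι ℝ x₄)
      = CliffordAlgebra.ι (Qf V η) z₁ * (CliffordAlgebra.ι (Qf V η) z₂ *
        (CliffordAlgebra.ι (Qf V η) z₃ * CliffordAlgebra.ι (Qf V η) z₄)) := by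
    rw [hEq]
    exact hat_prod V η z₁ z₂ z₃ z₄ h12 h13 h14 h23 h24 h34
  simp only [brk, betaPhi, hhat]
  exact Stmt7Core.main_alg (Qf V η) z₁ z₂ z₃ z₄ h12 h13 h14 h23 h24 h34 u v w
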